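/- Let ω ∈ (1,2) and for l ∈ ℤ define a_l^{(ω)} := (-1)^l Γ(ω+1) / ( Γ(ω/2 - l + 1) · Γ(ω/2 + l + 1) ). Then for every natural number n ≥ 1 the symmetric partial sum is strictly positive: Σ_{l=-n}^{n} a_l^{(ω)} > 0. In particular every row sum of the finite Toeplitz matrix [a_{i-j}^{(ω)}]_{i,j=1}^{n} is strictly positive, i.e. the matrix is strictly diagonally dominant. -/

import Mathlib

open Finset

private lemma aux_gamma_sign (x : ℝ) (hx0 : 0 < x) (hx1 : x < 1) :
    ∀ n : ℕ, 0 < (-1 : ℝ) ^ n * Real.Gamma (x - n) := by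
  intro n
  induction n with
  | zero => simpa using Real.Gamma_pos_of_pos hx0
  | succ n ih =>
    have hne : x - (n + 1 : ℕ) ≠ 0 := by
      push_cast; intro h; nlinarith
    have hrec : Real.Gamma (x - n) = (x - (n+1:ℕ)) * Real.Gamma (x - (n+1:ℕ)) := by
      have := Real.Gamma_add_one hne
      rw [← this]; congr 1; push_cast; ring
    have hlt : x - ((n:ℝ) + 1) < 0 := by nlinarith [Nat.cast_nonneg (α := ℝ) n]
    rw [hrec] at ih
    push_cast at ih ⊢
    have ht : 0 < (x - ((n:ℝ)+1)) * ((-1:ℝ)^n * Real.Gamma (x - ((n:ℝ)+1))) := by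
      nlinarith [ih]
    have hb : (-1:ℝ)^n * Real.Gamma (x - ((n:ℝ)+1)) < 0 := by nlinarith [ht, hlt]
    rw [pow_succ]
    nlinarith [hb]

private lemma aux_gamma_ne (x : ℝ) (hx0 : 0 < x) (hx1 : x < 1) (l : ℤ) :
    Real.Gamma (x + l) ≠ 0 := by
  apply Real.Gamma_ne_zero
  intro m h
  have h1 : ((-(m:ℤ) - l : ℤ) : ℝ) = x := by push_cast; linarith
  have h2 : (0:ℝ) < ((-(m:ℤ) - l : ℤ) : ℝ) := by rw [h1]; exact hx0
  have h3 : ((-(m:ℤ) - l : ℤ) : ℝ) < 1 := by rw [h1]; exact hx1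
  have h2' : 0 < -(m:ℤ) - l := by exact_mod_cast h2
  have h3' : -(m:ℤ) - l < 1 := by exact_mod_cast h3
  omega

/-- For `ω ∈ (1,2)` and `a_l := (-1)^l Γ(ω+1)/(Γ(ω/2-l+1)Γ(ω/2+l+1))`, every symmetric
partial sum `∑_{l=-n}^{n} a_l` with `n ≥ 1` is strictly positive. In particular every
row sum of the Toeplitz matrix `[a_{i-j}]_{i,j=1}^{n}` is strictly positive, i.e. the
matrix is strictly diagonally dominant. -/
theorem fourier_coefficients_partial_sum_pos
    (ω : ℝ) (hω : ω ∈ Set.Ioo (1 : ℝ) 2)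
    (a : ℤ → ℝ)
    (ha : ∀ l : ℤ, a l = (-1 : ℝ) ^ l * Real.Gamma (ω + 1) /
        (Real.Gamma (ω / 2 - l + 1) * Real.Gamma (ω / 2 + l + 1))) :
    (∀ n : ℕ, 1 ≤ n → 0 < ∑ l ∈ Finset.Icc (-(n : ℤ)) (n : ℤ), a l) ∧
    (∀ n : ℕ, 1 ≤ n → ∀ i : Fin n,
      0 < ∑ j : Fin n, (Matrix.of fun i j : Fin n => a ((i : ℤ) - (j : ℤ))) i j) ∧
    (∀ n : ℕ, 1 ≤ n → ∀ i : Fin n,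
      ∑ j ∈ Finset.univ.erase i, |a ((i : ℤ) - (j : ℤ))| < a 0) := by
  obtain ⟨hω1, hω2⟩ := hω
  have hx0 : 0 < ω/2 := by linarith
  have hx1 : ω/2 < 1 := by linarith
  have hneI : ∀ m : ℤ, ω/2 + (m:ℝ) ≠ 0 := by
    intro m h
    have h1 : ((-m : ℤ) : ℝ) = ω/2 := by push_cast; linarith
    have h2 : (0:ℝ) < ((-m:ℤ):ℝ) := by rw [h1]; exact hx0
    have h3 : ((-m:ℤ):ℝ) < 1 := by rw [h1]; exact hx1
    have h2' : 0 < -m := by exact_mod_cast h2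
    have h3' : -m < 1 := by exact_mod_cast h3
    omega
  have hne : ∀ (c : ℤ) (y : ℝ), y = ω/2 + (c:ℝ) → Real.Gamma y ≠ 0 := by
    intro c y hy
    rw [hy]; exact aux_gamma_ne (ω/2) hx0 hx1 c
  set d : ℤ → ℝ := fun m => (-1:ℝ)^m * Real.Gamma ω /
      (Real.Gamma (ω/2 - m + 1) * Real.Gamma (ω/2 + m)) with hd
  -- the telescoping identity
  have had : ∀ l : ℤ, a l = d l - d (l+1) := by
    intro l
    rw [ha, hd]
    simp only
    have e1 : Real.Gamma (ω/2 + l + 1) = (ω/2 + l) * Real.Gamma (ω/2 + l) :=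
      Real.Gamma_add_one (hneI l)
    have h2 : ω/2 - (l:ℝ) ≠ 0 := by
      have := hneI (-l); push_cast at this; intro h; exact this (by linarith)
    have e2 : Real.Gamma (ω/2 - l + 1) = (ω/2 - l) * Real.Gamma (ω/2 - l) := by
      rw [← Real.Gamma_add_one h2]
    have e3 : Real.Gamma (ω + 1) = ω * Real.Gamma ω :=
      Real.Gamma_add_one (by positivity)
    have e4 : ((l + 1 : ℤ) : ℝ) = (l:ℝ) + 1 := by push_cast; ring
    have e5 : (-1:ℝ) ^ (l+1) = (-1:ℝ)^l * (-1) := zpow_add_one₀ (by norm_num) l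
    have g1 : Real.Gamma (ω/2 - l) ≠ 0 := hne (-l) _ (by push_cast; ring)
    have g2 : Real.Gamma (ω/2 + l) ≠ 0 := hne l _ (by push_cast; ring)
    have h1 : ω/2 + (l:ℝ) ≠ 0 := hneI l
    rw [e5, e4, e3]
    rw [show ω/2 - ((l:ℝ)+1) + 1 = ω/2 - l by ring, show ω/2 + ((l:ℝ)+1) = ω/2 + l + 1 by ring]
    rw [e1, e2]
    have abstract : ∀ (c G A B P Q : ℝ), A ≠ 0 → B ≠ 0 → P ≠ 0 → Q ≠ 0 →
        c * ((P+Q) * G) / (P * A * (Q * B)) = c * G / (P * A * B) - c * -1 * G / (A * (Q * B)) := by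
      intro c G A B P Q hA hB hP hQ
      field_simp
      ring
    have habs := abstract ((-1:ℝ)^l) (Real.Gamma ω) (Real.Gamma (ω/2 - l)) (Real.Gamma (ω/2 + l))
      (ω/2 - l) (ω/2 + l) g1 g2 h2 h1
    rw [show (ω/2 - (l:ℝ)) + (ω/2 + (l:ℝ)) = ω by ring] at habs
    convert habs using 2 <;> ring
  -- telescoping sums
  have hrange : ∀ (p : ℤ) (m : ℕ),
      ∑ k ∈ Finset.range m, a (p - k) = d (p - m + 1) - d (p + 1) := by
    intro p m
    induction m with
    | zero => simp
    | succ m ih =>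
      rw [Finset.sum_range_succ, ih, had (p - m)]
      rw [show p - ((m+1:ℕ):ℤ) + 1 = p - (m:ℕ) by push_cast; ring]
      ring
  -- sign of d
  have hd_pos : ∀ m : ℤ, m ≤ 0 → 0 < d m := by
    intro m hm
    rw [show m = -(((-m).toNat : ℕ) : ℤ) by omega]
    set k := (-m).toNat
    rw [hd]; simp only
    have hz : (-1:ℝ)^(-(k:ℤ)) = (-1:ℝ)^k := by
      rw [zpow_neg, zpow_natCast]
      rcases Nat.even_or_odd k with h | h
      · rw [h.neg_one_pow]; norm_num
      · rw [h.neg_one_pow]; norm_num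
    rw [hz, show ((-(k:ℤ) : ℤ):ℝ) = -(k:ℝ) by push_cast; ring]
    rw [show ω/2 - (-(k:ℝ)) + 1 = ω/2 + k + 1 by ring, show ω/2 + (-(k:ℝ)) = ω/2 - k by ring]
    have hs := aux_gamma_sign (ω/2) hx0 hx1 k
    have hp : 0 < Real.Gamma (ω/2 + k + 1) := Real.Gamma_pos_of_pos (by positivity)
    have hG : 0 < Real.Gamma ω := Real.Gamma_pos_of_pos (by linarith)
    rcases Nat.even_or_odd k with h | h
    · rw [h.neg_one_pow] at hs ⊢
      exact div_pos (by linarith) (mul_pos hp (by linarith))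
    · rw [h.neg_one_pow] at hs ⊢
      exact div_pos_of_neg_of_neg (by linarith) (mul_neg_of_pos_of_neg hp (by linarith))
  have hd_neg : ∀ m : ℤ, 1 ≤ m → d m < 0 := by
    intro m hm
    rw [show m = (((m-1).toNat : ℕ) : ℤ) + 1 by omega]
    set k := (m-1).toNat
    rw [hd]; simp only
    have hz : (-1:ℝ)^((k:ℤ)+1) = (-1:ℝ)^k * (-1) := by
      rw [zpow_add_one₀ (by norm_num), zpow_natCast]
    rw [hz, show (((k:ℤ) + 1 : ℤ):ℝ) = (k:ℝ) + 1 by push_cast; ring]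
    rw [show ω/2 - ((k:ℝ)+1) + 1 = ω/2 - k by ring, show ω/2 + ((k:ℝ)+1) = ω/2 + k + 1 by ring]
    have hs := aux_gamma_sign (ω/2) hx0 hx1 k
    have hp : 0 < Real.Gamma (ω/2 + k + 1) := Real.Gamma_pos_of_pos (by positivity)
    have hG : 0 < Real.Gamma ω := Real.Gamma_pos_of_pos (by linarith)
    rcases Nat.even_or_odd k with h | h
    · rw [h.neg_one_pow] at hs ⊢
      exact div_neg_of_neg_of_pos (by linarith) (mul_pos (by linarith) hp)
    · rw [h.neg_one_pow] at hs ⊢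
      exact div_neg_of_pos_of_neg (by nlinarith) (mul_neg_of_neg_of_pos (by linarith) hp)
  -- row sums
  have hrow : ∀ (n : ℕ), 1 ≤ n → ∀ i : Fin n, 0 < ∑ j : Fin n, a ((i:ℤ) - (j:ℤ)) := by
    intro n hn i
    have hcast : ∑ j : Fin n, a ((i:ℤ) - (j:ℤ)) = ∑ k ∈ Finset.range n, a ((i:ℤ) - k) :=
      Fin.sum_univ_eq_sum_range (fun k => a ((i:ℤ) - k)) n
    rw [hcast, hrange]
    have hi := i.isLt
    have h1 : 0 < d ((i:ℤ) - n + 1) := hd_pos _ (by omega)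
    have h2 : d ((i:ℤ) + 1) < 0 := hd_neg _ (by omega)
    linarith
  -- negativity of off-diagonal coefficients
  have haneg : ∀ l : ℤ, l ≠ 0 → a l < 0 := by
    have key : ∀ k : ℕ, a ((k:ℤ) + 1) < 0 := by
      intro k
      rw [ha]
      have hz : (-1:ℝ)^((k:ℤ)+1) = (-1:ℝ)^k * (-1) := by
        rw [zpow_add_one₀ (by norm_num), zpow_natCast]
      rw [hz, show (((k:ℤ) + 1 : ℤ):ℝ) = (k:ℝ) + 1 by push_cast; ring]
      rw [show ω/2 - ((k:ℝ)+1) + 1 = ω/2 - k by ring,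
          show ω/2 + ((k:ℝ)+1) + 1 = ω/2 + k + 2 by ring]
      have hs := aux_gamma_sign (ω/2) hx0 hx1 k
      have hp : 0 < Real.Gamma (ω/2 + k + 2) := Real.Gamma_pos_of_pos (by positivity)
      have hG : 0 < Real.Gamma (ω + 1) := Real.Gamma_pos_of_pos (by linarith)
      rcases Nat.even_or_odd k with h | h
      · rw [h.neg_one_pow] at hs ⊢
        exact div_neg_of_neg_of_pos (by linarith) (mul_pos (by linarith) hp)
      · rw [h.neg_one_pow] at hs ⊢
        exact div_neg_of_pos_of_neg (by nlinarith) (mul_neg_of_neg_of_pos (by linarith) hp)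
    have hsymm : ∀ l : ℤ, a (-l) = a l := by
      intro l
      rw [ha, ha]
      have hz : (-1:ℝ)^(-l) = (-1:ℝ)^l := by
        rcases Int.even_or_odd l with h | h
        · rw [h.neg_one_zpow, (h.neg).neg_one_zpow]
        · rw [h.neg_one_zpow, (by simpa using h.neg : Odd (-l)).neg_one_zpow]
      rw [hz, show ((-l : ℤ):ℝ) = -(l:ℝ) by push_cast; ring]
      rw [show ω/2 - (-(l:ℝ)) + 1 = ω/2 + l + 1 by ring,
          show ω/2 + (-(l:ℝ)) + 1 = ω/2 - l + 1 by ring]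
      rw [mul_comm (Real.Gamma (ω/2 + l + 1))]
    intro l hl
    rcases lt_or_gt_of_ne hl with h | h
    · rw [← hsymm]
      have : -l = (((-l-1).toNat : ℕ) : ℤ) + 1 := by omega
      rw [this]; exact key _
    · have : l = (((l-1).toNat : ℕ) : ℤ) + 1 := by omega
      rw [this]; exact key _
  refine ⟨?_, ?_, ?_⟩
  · -- symmetric partial sums
    intro n hn
    have h1 : ∑ l ∈ Finset.Icc (-(n:ℤ)) (n:ℤ), a l
        = ∑ k ∈ Finset.range (2*n+1), a ((n:ℤ) - k) := by
      apply Finset.sum_nbij' (fun l => ((n:ℤ) - l).toNat) (fun k => (n:ℤ) - k)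
      · intro l hl
        simp only [Finset.mem_Icc] at hl
        simp only [Finset.mem_range]
        omega
      · intro k hk
        simp only [Finset.mem_range] at hk
        simp only [Finset.mem_Icc]
        omega
      · intro l hl
        simp only [Finset.mem_Icc] at hl
        omega
      · intro k hk
        simp only [Finset.mem_range] at hk
        omega
      · intro l hl
        simp only [Finset.mem_Icc] at hl
        congr 1
        omega
    rw [h1, hrange]
    rw [show (n:ℤ) - ((2*n+1 : ℕ):ℤ) + 1 = -(n:ℤ) by push_cast; ring]
    have h2 : 0 < d (-(n:ℤ)) := hd_pos _ (by omega)
    have h3 : d ((n:ℤ) + 1) < 0 := hd_neg _ (by omega)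
    linarith
  · -- row sums of the Toeplitz matrix
    intro n hn i
    simpa only [Matrix.of_apply] using hrow n hn i
  · -- strict diagonal dominance
    intro n hn i
    have h1 : ∀ j ∈ Finset.univ.erase i, |a ((i:ℤ) - (j:ℤ))| = -(a ((i:ℤ) - (j:ℤ))) := by
      intro j hj
      have hij : j ≠ i := Finset.ne_of_mem_erase hj
      apply abs_of_neg
      apply haneg
      intro h
      apply hij
      have : (j:ℤ) = (i:ℤ) := by omega
      exact Fin.ext (by exact_mod_cast this)
    rw [Finset.sum_congr rfl h1, Finset.sum_neg_distrib]
    have h2 := Finset.add_sum_erase Finset.univ (fun j : Fin n => a ((i:ℤ) - (j:ℤ)))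
      (Finset.mem_univ i)
    have h3 := hrow n hn i
    rw [← h2] at h3
    have h3' : 0 < a 0 + ∑ x ∈ Finset.univ.erase i, a ((i:ℤ) - (x:ℤ)) := by
      simpa using h3
    linarith
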